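/- Let T be an ITM on r intervals. Then the attractor X has only finitely many interval components, i.e. the set of connected components of X that are nondegenerate intervals is finite. -/

import Mathlib

open Filter Set

/-- An interval translation map on `r` intervals: discontinuity points
`0 = β₀ < β₁ < ⋯ < β_{r-1} < β_r = 1` (field `pts`) and translation parameters
`γ₁, …, γ_r` (field `tr`). -/
structure ITM (r : ℕ) : Type where
  hr : 2 ≤ r
  pts : Fin (r + 1) → ℝ
  tr : Fin r → ℝ
  pts_zero : pts 0 = 0
  pts_last : pts (Fin.last r) = 1
  pts_mono : StrictMono pts
  tr_lb : ∀ i : Fin r, -(pts i.castSucc) ≤ tr i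
  tr_ub : ∀ i : Fin r, tr i ≤ 1 - pts i.succ

namespace ITM

variable {r : ℕ}

/-- The continuity interval `I_i = [β_{i-1}, β_i)`. -/
def seg (M : ITM r) (i : Fin r) : Set ℝ := Set.Ico (M.pts i.castSucc) (M.pts i.succ)

open Classical in
/-- The interval translation map itself: `T x = x + γ_i` for `x ∈ I_i`. -/
noncomputable def map (M : ITM r) (x : ℝ) : ℝ :=
  x + ∑ i : Fin r, if x ∈ M.seg i then M.tr i else 0

/-- The attractor `X = ⋂ₙ Tⁿ([0,1))`. -/
def X (M : ITM r) : Set ℝ := ⋂ n : ℕ, (M.map)^[n] '' Set.Ico (0 : ℝ) 1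

/-- The geometric discontinuities `β₁, …, β_{r-1}`; `disc t` has index `ind = t+1`. -/
def disc (M : ITM r) (t : Fin (r - 1)) : ℝ := M.pts ⟨t.1 + 1, by have := t.isLt; omega⟩

/-- One-sided iterate `Tⁿ(x⁺) = lim_{y ↓ x} Tⁿ(y)`. -/
noncomputable def iterR (M : ITM r) (n : ℕ) (x : ℝ) : ℝ :=
  limUnder (nhdsWithin x (Set.Ioi x)) (fun y => (M.map)^[n] y)

/-- One-sided iterate `Tⁿ(x⁻) = lim_{y ↑ x} Tⁿ(y)`. -/
noncomputable def iterL (M : ITM r) (n : ℕ) (x : ℝ) : ℝ :=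
  limUnder (nhdsWithin x (Set.Iio x)) (fun y => (M.map)^[n] y)

/-- Signed iterate: `sg = true` is the `⁺`-side, `sg = false` the `⁻`-side. -/
noncomputable def sIter (M : ITM r) (n : ℕ) (x : ℝ) (sg : Bool) : ℝ :=
  if sg then M.iterR n x else M.iterL n x

/-- `J` is an interval component of the attractor: a connected component of `X`
that is a nondegenerate (half-open) interval. -/
def IsIntervalComponent (M : ITM r) (J : Set ℝ) : Prop :=
  (∃ a b : ℝ, a < b ∧ J = Set.Ico a b) ∧ ∃ x ∈ M.X, J = connectedComponentIn M.X x

open Classical in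
/-- `k_s(x⁺, n)`: number of visits of the `⁺`-orbit of `x` to `I_s` before time `n`. -/
noncomputable def kR (M : ITM r) (x : ℝ) (n : ℕ) (s : Fin r) : ℕ :=
  ((Finset.range n).filter
    (fun i => M.pts s.castSucc ≤ M.iterR i x ∧ M.iterR i x < M.pts s.succ)).card

open Classical in
/-- `k_s(x⁻, n)`: number of visits of the `⁻`-orbit of `x` to `I_s` before time `n`. -/
noncomputable def kL (M : ITM r) (x : ℝ) (n : ℕ) (s : Fin r) : ℕ :=
  ((Finset.range n).filter
    (fun i => M.pts s.castSucc < M.iterL i x ∧ M.iterL i x ≤ M.pts s.succ)).card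

open Classical in
/-- `k_s(x, n)` for a geometric point `x`. -/
noncomputable def kGeo (M : ITM r) (x : ℝ) (n : ℕ) (s : Fin r) : ℕ :=
  ((Finset.range n).filter (fun i => (M.map)^[i] x ∈ M.seg s)).card

/-- The forward orbit of a set. -/
def orbitSet (M : ITM r) (S : Set ℝ) : Set ℝ := ⋃ n : ℕ, (M.map)^[n] '' S

end ITM

/-- The space `W(r) = ℝ^r ⊕ ℝ^{r-1}` of coefficient vectors. -/
abbrev Wsp (r : ℕ) : Type := (Fin r → ℝ) × (Fin (r - 1) → ℝ)


namespace ITM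
variable {r : ℕ}

/-- First return time to `J` (junk value if the orbit never returns). -/
noncomputable def retTime (M : ITM r) (J : Set ℝ) (x : ℝ) : ℕ :=
  sInf {k : ℕ | 1 ≤ k ∧ (M.map)^[k] x ∈ J}

/-- First return map to `J`. -/
noncomputable def retMap (M : ITM r) (J : Set ℝ) (x : ℝ) : ℝ :=
  (M.map)^[M.retTime J x] x

/-- The signed point `x⁺` belongs to the attractor `X`. -/
def posInX (M : ITM r) (x : ℝ) : Prop :=
  ∀ n : ℕ, ∃ ε > (0 : ℝ), Set.Ico x (x + ε) ⊆ (M.map)^[n] '' Set.Ico (0 : ℝ) 1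

/-- The signed point `x⁻` belongs to the attractor `X`. -/
def negInX (M : ITM r) (x : ℝ) : Prop :=
  ∀ n : ℕ, ∃ ε > (0 : ℝ), Set.Ico (x - ε) x ⊆ (M.map)^[n] '' Set.Ico (0 : ℝ) 1

/-- The union of all interval components of the attractor. -/
def A1' (M : ITM r) : Set ℝ := ⋃₀ {J : Set ℝ | M.IsIntervalComponent J}

end ITM

/-- A Cantor set: nonempty, compact, totally disconnected, without isolated points. -/
def IsCantorSet (S : Set ℝ) : Prop :=
  S.Nonempty ∧ IsCompact S ∧ IsTotallyDisconnected S ∧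
    ∀ x ∈ S, AccPt x (Filter.principal S)

open Filter Set

namespace ITM
variable {r : ℕ} (M : ITM r)

/-- iterated images `Iₙ = Tⁿ([0,1))`. -/
noncomputable def In (n : ℕ) : Set ℝ := (M.map)^[n] '' Set.Ico 0 1

lemma In_zero : M.In 0 = Set.Ico 0 1 := by simp [In]

lemma In_succ (n : ℕ) : M.In (n + 1) = M.map '' M.In n := by
  simp only [In, Function.iterate_succ', Set.image_comp]

lemma ptsMono : Monotone M.pts := M.pts_mono.monotone

lemma pts_castSucc_nonneg (j : Fin r) : 0 ≤ M.pts j.castSucc := by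
  have := M.ptsMono (Fin.zero_le j.castSucc); rwa [M.pts_zero] at this

lemma pts_succ_le_one (j : Fin r) : M.pts j.succ ≤ 1 := by
  have := M.ptsMono (Fin.le_last j.succ); rwa [M.pts_last] at this

lemma fin_succ_le_castSucc {r : ℕ} {i j : Fin r} (h : i < j) :
    (i.succ : Fin (r+1)) ≤ j.castSucc := by
  simp only [Fin.le_def, Fin.lt_def, Fin.val_succ, Fin.coe_castSucc] at *
  omega

lemma seg_unique {x : ℝ} {i j : Fin r} (hi : x ∈ M.seg i) (hj : x ∈ M.seg j) : i = j := by
  by_contra hne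
  rcases lt_or_gt_of_ne hne with h | h
  · have h1 : M.pts i.succ ≤ M.pts j.castSucc := M.ptsMono (fin_succ_le_castSucc h)
    exact absurd (lt_of_lt_of_le hi.2 (h1.trans hj.1)) (lt_irrefl x)
  · have h1 : M.pts j.succ ≤ M.pts i.castSucc := M.ptsMono (fin_succ_le_castSucc h)
    exact absurd (lt_of_lt_of_le hj.2 (h1.trans hi.1)) (lt_irrefl x)

lemma map_eq {x : ℝ} {j : Fin r} (hj : x ∈ M.seg j) : M.map x = x + M.tr j := by
  classical
  unfold map
  congr 1
  rw [Finset.sum_eq_single j]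
  · simp [hj]
  · intro i _ hij
    have : x ∉ M.seg i := fun h => hij (M.seg_unique h hj)
    simp [this]
  · simp

lemma exists_seg {x : ℝ} (hx : x ∈ Set.Ico (0:ℝ) 1) : ∃ j : Fin r, x ∈ M.seg j := by
  classical
  set s : Finset (Fin (r+1)) := Finset.univ.filter (fun i => M.pts i ≤ x) with hs
  have h0 : (0 : Fin (r+1)) ∈ s := by simp [hs, M.pts_zero, hx.1]
  have hne : s.Nonempty := ⟨0, h0⟩
  set i := s.max' hne with hi
  have his : i ∈ s := s.max'_mem hne
  have hile : M.pts i ≤ x := by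
    have := his; rw [hs] at this; simpa using this
  have hlast : i ≠ Fin.last r := by
    intro h; rw [h, M.pts_last] at hile; exact absurd hx.2 (not_lt.mpr hile)
  refine ⟨i.castPred hlast, ?_, ?_⟩
  · rw [Fin.castSucc_castPred]; exact hile
  · by_contra h
    push_neg at h
    have hmem : (i.castPred hlast).succ ∈ s := by simp [hs, h]
    have h1 := s.le_max' _ hmem
    rw [← hi] at h1
    have h2 : i < (i.castPred hlast).succ := by
      simp [Fin.lt_def]
    exact absurd h1 (not_le.mpr h2)

lemma map_mem_Ico {x : ℝ} (hx : x ∈ Set.Ico (0:ℝ) 1) : M.map x ∈ Set.Ico (0:ℝ) 1 := by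
  obtain ⟨j, hj⟩ := M.exists_seg hx
  rw [M.map_eq hj]
  constructor
  · have h1 := M.tr_lb j
    have h2 := hj.1
    linarith
  · have h1 := M.tr_ub j
    have h2 := hj.2
    linarith

lemma In_succ_subset (n : ℕ) : M.In (n+1) ⊆ M.In n := by
  induction n with
  | zero =>
    rw [In_zero, In_succ, In_zero]
    rintro y ⟨w, hw, rfl⟩
    exact M.map_mem_Ico hw
  | succ n ih =>
    have h2 : M.map '' M.In (n+1) ⊆ M.map '' M.In n := Set.image_mono ih
    rwa [← In_succ, ← In_succ] at h2

lemma In_antitone {m n : ℕ} (h : m ≤ n) : M.In n ⊆ M.In m := by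
  induction n with
  | zero => rw [Nat.le_zero.mp h]
  | succ n ih =>
    rcases Nat.lt_or_ge m (n+1) with h' | h'
    · exact (M.In_succ_subset n).trans (ih (by omega))
    · have : m = n + 1 := by omega
      rw [this]

lemma In_subset_Ico (n : ℕ) : M.In n ⊆ Set.Ico (0:ℝ) 1 := by
  rw [← In_zero]; exact M.In_antitone (Nat.zero_le n)

lemma X_eq_iInter : M.X = ⋂ n, M.In n := rfl

lemma X_subset_In (n : ℕ) : M.X ⊆ M.In n := Set.iInter_subset _ n

lemma X_subset_Ico : M.X ⊆ Set.Ico (0:ℝ) 1 := by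
  rw [← In_zero]; exact M.X_subset_In 0

lemma map_mem_X {x : ℝ} (hx : x ∈ M.X) : M.map x ∈ M.X := by
  rw [X_eq_iInter, Set.mem_iInter]
  intro n
  have h1 : M.map x ∈ M.In (n+1) := by
    rw [In_succ]; exact ⟨x, M.X_subset_In n hx, rfl⟩
  exact M.In_succ_subset n h1


lemma exists_Ioc {x : ℝ} (hx : x ∈ Set.Ioc (0:ℝ) 1) :
    ∃ j : Fin r, x ∈ Set.Ioc (M.pts j.castSucc) (M.pts j.succ) := by
  classical
  set s : Finset (Fin (r+1)) := Finset.univ.filter (fun i => x ≤ M.pts i) with hs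
  have h0 : (Fin.last r) ∈ s := by simp [hs, M.pts_last, hx.2]
  have hne : s.Nonempty := ⟨_, h0⟩
  set i := s.min' hne with hi
  have his : i ∈ s := s.min'_mem hne
  have hile : x ≤ M.pts i := by
    have := his; rw [hs] at this; simpa using this
  have hzero : i ≠ 0 := by
    intro h; rw [h, M.pts_zero] at hile; exact absurd hx.1 (not_lt.mpr hile)
  refine ⟨i.pred hzero, ?_, ?_⟩
  · by_contra h
    push_neg at h
    have hmem : (i.pred hzero).castSucc ∈ s := by simp [hs, h]
    have h1 := s.min'_le _ hmem
    rw [← hi] at h1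
    have hv : i.val ≠ 0 := by intro h; exact hzero (Fin.ext (by simp [h]))
    have h2 : (i.pred hzero).castSucc < i := by
      rw [Fin.lt_def, Fin.coe_castSucc, Fin.coe_pred]
      omega
    exact absurd h1 (not_le.mpr h2)
  · rw [Fin.succ_pred]; exact hile

lemma Ioc_unique {x : ℝ} {i j : Fin r} (hi : x ∈ Set.Ioc (M.pts i.castSucc) (M.pts i.succ))
    (hj : x ∈ Set.Ioc (M.pts j.castSucc) (M.pts j.succ)) : i = j := by
  by_contra hne
  rcases lt_or_gt_of_ne hne with h | h
  · have h1 : M.pts i.succ ≤ M.pts j.castSucc := M.ptsMono (fin_succ_le_castSucc h)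
    exact absurd (lt_of_le_of_lt (hi.2.trans h1) hj.1) (lt_irrefl x)
  · have h1 : M.pts j.succ ≤ M.pts i.castSucc := M.ptsMono (fin_succ_le_castSucc h)
    exact absurd (lt_of_le_of_lt (hj.2.trans h1) hi.1) (lt_irrefl x)

open Classical in
/-- the index of the Ioc-interval containing `x`. -/
noncomputable def pidx (x : ℝ) : Fin r :=
  if h : ∃ j : Fin r, x ∈ Set.Ioc (M.pts j.castSucc) (M.pts j.succ) then h.choose
  else ⟨0, by have := M.hr; omega⟩

/-- the left-limit map `T⁻`. -/
noncomputable def pm (x : ℝ) : ℝ := x + M.tr (M.pidx x)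

lemma pidx_spec {x : ℝ} (hx : x ∈ Set.Ioc (0:ℝ) 1) :
    x ∈ Set.Ioc (M.pts (M.pidx x).castSucc) (M.pts (M.pidx x).succ) := by
  have h := M.exists_Ioc hx
  rw [pidx, dif_pos h]
  exact h.choose_spec

lemma mem_Ioc01_of_mem_Ioc {x : ℝ} {j : Fin r}
    (hj : x ∈ Set.Ioc (M.pts j.castSucc) (M.pts j.succ)) : x ∈ Set.Ioc (0:ℝ) 1 :=
  ⟨lt_of_le_of_lt (M.pts_castSucc_nonneg j) hj.1, hj.2.trans (M.pts_succ_le_one j)⟩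

lemma pidx_eq {x : ℝ} {j : Fin r}
    (hj : x ∈ Set.Ioc (M.pts j.castSucc) (M.pts j.succ)) : M.pidx x = j :=
  M.Ioc_unique (M.pidx_spec (M.mem_Ioc01_of_mem_Ioc hj)) hj

lemma pm_eq {x : ℝ} {j : Fin r}
    (hj : x ∈ Set.Ioc (M.pts j.castSucc) (M.pts j.succ)) : M.pm x = x + M.tr j := by
  rw [pm, M.pidx_eq hj]

lemma pm_mem_Ioc {x : ℝ} (hx : x ∈ Set.Ioc (0:ℝ) 1) : M.pm x ∈ Set.Ioc (0:ℝ) 1 := by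
  have hj := M.pidx_spec hx
  set j := M.pidx x
  rw [pm]
  constructor
  · have h1 := M.tr_lb j
    have h2 := hj.1
    linarith
  · have h1 := M.tr_ub j
    have h2 := hj.2
    linarith

/-- distance down to the discontinuity below. -/
noncomputable def dlo (x : ℝ) : ℝ := x - M.pts (M.pidx x).castSucc

lemma dlo_pos {x : ℝ} (hx : x ∈ Set.Ioc (0:ℝ) 1) : 0 < M.dlo x := by
  have := (M.pidx_spec hx).1; rw [dlo]; linarith

lemma germ_step {x t : ℝ} (hx : x ∈ Set.Ioc (0:ℝ) 1)
    (hg : Set.Ico (x - t) x ⊆ M.X) (ht : t ≤ M.dlo x) :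
    Set.Ico (M.pm x - t) (M.pm x) ⊆ M.X := by
  have hj := M.pidx_spec hx
  set j := M.pidx x
  intro y hy
  have hpm : M.pm x = x + M.tr j := rfl
  rw [hpm] at hy
  have hw : y - M.tr j ∈ Set.Ico (x - t) x := by
    constructor
    · have := hy.1; linarith
    · have := hy.2; linarith
  have hwX := hg hw
  have hwseg : y - M.tr j ∈ M.seg j := by
    constructor
    · have h1 := hw.1
      have h2 : x - t ≥ M.pts j.castSucc := by
        have := ht; rw [dlo] at this; linarith
      linarith
    · have := hw.2
      have h2 := hj.2
      linarith
  have hmap : M.map (y - M.tr j) = y := by rw [M.map_eq hwseg]; ring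
  have := M.map_mem_X hwX
  rwa [hmap] at this

/-- The set of right endpoints of interval components ("caps"). -/
def CapSet : Set ℝ := {b : ℝ | b ∉ M.X ∧ ∃ a, a < b ∧ Set.Ico a b ⊆ M.X}

lemma chain : ∀ (N : ℕ) (e : ℝ), e ∈ Set.Ioc (0:ℝ) 1 → e ∉ M.In N →
    (∀ ε > (0:ℝ), ∃ y ∈ M.In N, y ∈ Set.Ioo (e - ε) e) →
    ∃ (k : ℕ) (j : Fin r), (M.pm)^[k] (M.pts j.succ) = e := by
  intro N
  induction N with
  | zero =>
    intro e he heN _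
    rw [In_zero] at heN
    have he1 : e = 1 := by
      rw [Set.mem_Ico] at heN
      push_neg at heN
      rcases lt_or_ge e 0 with h | h
      · exact absurd he.1 (not_lt.mpr (le_of_lt h))
      · exact le_antisymm he.2 (heN h)
    have hr1 : r - 1 < r := by have := M.hr; omega
    refine ⟨0, ⟨r-1, hr1⟩, ?_⟩
    have : (⟨r-1, hr1⟩ : Fin r).succ = Fin.last r := by
      apply Fin.ext; simp [Fin.val_succ]; have := M.hr; omega
    simp [this, M.pts_last, he1]
  | succ N ih =>
    intro e he heN hlim
    classical
    -- for each t : ℕ, a witness close to e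
    have hwit : ∀ t : ℕ, ∃ (j : Fin r) (w : ℝ), w ∈ M.In N ∧ w ∈ M.seg j ∧
        w + M.tr j ∈ Set.Ioo (e - 1/(t+1)) e := by
      intro t
      have hpos : (0:ℝ) < 1/(t+1) := by positivity
      obtain ⟨y, hyIn, hy⟩ := hlim _ hpos
      rw [In_succ] at hyIn
      obtain ⟨w, hwIn, rfl⟩ := hyIn
      obtain ⟨j, hj⟩ := M.exists_seg (M.In_subset_Ico N hwIn)
      exact ⟨j, w, hwIn, hj, by rwa [← M.map_eq hj]⟩
    choose jf wf hwf1 hwf2 hwf3 using hwit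
    obtain ⟨j, hjfib⟩ := Finite.exists_infinite_fiber jf
    have hfib : Set.Infinite (jf ⁻¹' {j}) := Set.infinite_coe_iff.mp hjfib
    set e' := e - M.tr j with he'
    -- approximation of e' from the left within In N ∩ seg j
    have happ : ∀ ε > (0:ℝ), ∃ w, w ∈ M.In N ∧ w ∈ M.seg j ∧ w ∈ Set.Ioo (e' - ε) e' := by
      intro ε hε
      obtain ⟨n, hn⟩ := exists_nat_one_div_lt hε
      obtain ⟨t, htfib, htn⟩ := hfib.exists_gt n
      have hjt : jf t = j := htfib
      have h3 := hwf3 t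
      rw [hjt] at h3
      have hlt : 1/((t:ℝ)+1) < ε := by
        have h4 : ((n:ℝ)+1) ≤ t := by exact_mod_cast htn
        have h5 : (0:ℝ) < (n:ℝ)+1 := by positivity
        have h6 : 1/((t:ℝ)+1) ≤ 1/((n:ℝ)+1) := by
          apply one_div_le_one_div_of_le h5; linarith
        exact lt_of_le_of_lt h6 hn
      refine ⟨wf t, hwf1 t, by rw [← hjt]; exact hwf2 t, ?_, ?_⟩
      · have := h3.1; simp only [he']; linarith
      · have := h3.2; simp only [he']; linarith
    -- location of e'
    obtain ⟨w₀, hw₀In, hw₀seg, hw₀⟩ := happ 1 one_pos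
    have he'le : e' ≤ M.pts j.succ := by
      by_contra h
      push_neg at h
      obtain ⟨w, _, hwseg, hw⟩ := happ (e' - M.pts j.succ) (by linarith)
      have := hwseg.2
      have := hw.1
      linarith
    have he'gt : M.pts j.castSucc < e' := lt_of_le_of_lt hw₀seg.1 hw₀.2
    have he'Ioc : e' ∈ Set.Ioc (M.pts j.castSucc) (M.pts j.succ) := ⟨he'gt, he'le⟩
    have hpme' : M.pm e' = e := by rw [M.pm_eq he'Ioc]; simp [he']
    rcases eq_or_lt_of_le he'le with heq | hlt
    · -- e' = β_{j.succ} : base of the orbit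
      exact ⟨1, j, by simp [← heq, hpme']⟩
    · -- e' < pts j.succ
      have he'notIn : e' ∉ M.In N := by
        intro hIn
        have he'seg : e' ∈ M.seg j := ⟨le_of_lt he'gt, hlt⟩
        have : M.map e' ∈ M.In (N+1) := by
          rw [In_succ]; exact ⟨e', hIn, rfl⟩
        rw [M.map_eq he'seg] at this
        rw [he'] at this
        simp at this
        exact heN this
      have he'Ioc01 : e' ∈ Set.Ioc (0:ℝ) 1 := M.mem_Ioc01_of_mem_Ioc he'Ioc
      obtain ⟨k, j', hkj'⟩ := ih e' he'Ioc01 he'notIn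
        (fun ε hε => by obtain ⟨w, hw1, _, hw3⟩ := happ ε hε; exact ⟨w, hw1, hw3⟩)
      exact ⟨k+1, j', by rw [Function.iterate_succ_apply', hkj', hpme']⟩

lemma cap_mem_Ioc {b : ℝ} (hb : b ∈ M.CapSet) : b ∈ Set.Ioc (0:ℝ) 1 := by
  obtain ⟨hbX, a, hab, hgerm⟩ := hb
  have haX := hgerm (Set.left_mem_Ico.mpr hab)
  have ha01 := M.X_subset_Ico haX
  constructor
  · linarith [ha01.1]
  · by_contra h
    push_neg at h
    have h1 : (1:ℝ) ∈ Set.Ico a b := ⟨le_of_lt ha01.2, h⟩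
    have := M.X_subset_Ico (hgerm h1)
    linarith [this.2]

lemma cap_in_orbit {b : ℝ} (hb : b ∈ M.CapSet) :
    ∃ (k : ℕ) (j : Fin r), (M.pm)^[k] (M.pts j.succ) = b := by
  obtain ⟨hbX, a, hab, hgerm⟩ := hb
  rw [X_eq_iInter, Set.mem_iInter] at hbX
  push_neg at hbX
  obtain ⟨N, hN⟩ := hbX
  apply M.chain N b (M.cap_mem_Ioc ⟨by rw [X_eq_iInter, Set.mem_iInter]; push_neg; exact ⟨N, hN⟩, a, hab, hgerm⟩) hN
  intro ε hε
  refine ⟨max a (b - ε/2), M.X_subset_In N (hgerm ⟨le_max_left _ _, ?_⟩), ?_, ?_⟩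
  · apply max_lt hab; linarith
  · have : b - ε < b - ε/2 := by linarith
    exact lt_of_lt_of_le this (le_max_right _ _)
  · apply max_lt hab; linarith

lemma eps_separated_finite {S : Set ℝ} {ε : ℝ} (hε : 0 < ε)
    (hS : S ⊆ Set.Ioc (0:ℝ) 1)
    (hsep : ∀ b ∈ S, ∀ b' ∈ S, b' < b → b' ≤ b - ε) : S.Finite := by
  have key : ∀ u v : ℝ, u ∈ S → v ∈ S → v < u → ⌊u/ε⌋ ≠ ⌊v/ε⌋ := by
    intro u v hu hv hlt heq
    have h1 : v ≤ u - ε := hsep u hu v hv hlt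
    have h2 : v/ε + 1 ≤ u/ε := by
      have h2' : (v + ε)/ε ≤ u/ε := (div_le_div_iff_of_pos_right hε).mpr (by linarith)
      rwa [add_div, div_self (ne_of_gt hε)] at h2'
    have h3 := Int.abs_sub_lt_one_of_floor_eq_floor heq
    rw [abs_sub_lt_iff] at h3
    linarith [h3.1]
  have hinj : Set.InjOn (fun b => ⌊b / ε⌋) S := by
    intro b hb b' hb' hfl
    by_contra hne
    rcases lt_trichotomy b b' with h | h | h
    · exact key b' b hb' hb h (by simpa using hfl.symm)
    · exact hne h
    · exact key b b' hb hb' h (by simpa using hfl)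
  have him : (fun b => ⌊b / ε⌋) '' S ⊆ Set.Icc (0:ℤ) ⌊1/ε⌋ := by
    rintro z ⟨b, hb, rfl⟩
    have hb1 := hS hb
    constructor
    · exact Int.floor_nonneg.mpr (le_of_lt (div_pos hb1.1 hε))
    · exact Int.floor_le_floor ((div_le_div_iff_of_pos_right hε).mpr hb1.2)
  exact Set.Finite.of_finite_image ((Set.finite_Icc _ _).subset him) hinj

lemma orbit_caps_finite (z : ℝ) (hz : z ∈ Set.Ioc (0:ℝ) 1) :
    (M.CapSet ∩ Set.range (fun k => (M.pm)^[k] z)).Finite := by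
  classical
  set x : ℕ → ℝ := fun k => (M.pm)^[k] z with hxdef
  have hxIoc : ∀ k, x k ∈ Set.Ioc (0:ℝ) 1 := by
    intro k
    induction k with
    | zero => exact hz
    | succ n ih =>
      have : x (n+1) = M.pm (x n) := Function.iterate_succ_apply' _ _ _
      rw [this]; exact M.pm_mem_Ioc ih
  have hxsucc : ∀ k, x (k+1) = M.pm (x k) := fun k => Function.iterate_succ_apply' _ _ _
  by_cases hinj : Function.Injective x
  case neg =>
    -- orbit is eventually periodic hence a finite set
    rw [Function.Injective] at hinj
    push_neg at hinj
    obtain ⟨a, b, hab, hne⟩ := hinj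
    -- wlog a < b
    have main : ∀ (a b : ℕ), a < b → x a = x b → (Set.range x).Finite := by
      intro a b hlt hab
      have hx_of_ge : ∀ n, x n ∈ x '' Set.Iio b := by
        intro n
        induction n using Nat.strong_induction_on with
        | _ n ih =>
          by_cases h : n < b
          · exact ⟨n, h, rfl⟩
          · push_neg at h
            have h1 : x n = x (a + (n - b)) := by
              have h3 : x n = (M.pm)^[n-b] (x b) := by
                rw [hxdef]
                simp only []
                rw [← Function.iterate_add_apply]
                congr 1
                omega
              have h4 : x (a + (n-b)) = (M.pm)^[n-b] (x a) := by
                rw [hxdef]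
                simp only []
                rw [← Function.iterate_add_apply]
                congr 1
                omega
              rw [h3, h4, hab]
            have h5 : a + (n - b) < n := by omega
            rw [h1]
            exact ih _ h5
      have : Set.range x ⊆ x '' Set.Iio b := by
        rintro w ⟨n, rfl⟩; exact hx_of_ge n
      exact ((Set.finite_Iio b).image x).subset this
    have hfin : (Set.range x).Finite := by
      rcases lt_or_gt_of_ne hne with h | h
      · exact main a b h hab
      · exact main b a h hab.symm
    exact hfin.subset Set.inter_subset_right
  case pos =>
    by_contra hfin
    have hinf : (M.CapSet ∩ Set.range x).Infinite := hfin
    set K : Set ℕ := x ⁻¹' M.CapSet with hK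
    have hKinf : K.Infinite := by
      intro hKfin
      apply hinf
      apply (hKfin.image x).subset
      rintro w ⟨hw1, n, rfl⟩
      exact ⟨n, hw1, rfl⟩
    obtain ⟨k₀, hk₀⟩ := hKinf.nonempty
    obtain ⟨hb₀X, a₀, ha₀, hgerm₀⟩ := hk₀
    set y : ℕ → ℝ := fun t => x (k₀ + t) with hy
    have hyIoc : ∀ t, y t ∈ Set.Ioc (0:ℝ) 1 := fun t => hxIoc _
    have hysucc : ∀ t, y (t+1) = M.pm (y t) := by
      intro t
      have : k₀ + (t+1) = (k₀ + t) + 1 := by omega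
      rw [hy]; simp only []; rw [this, hxsucc]
    have hyinj : Function.Injective y := by
      intro s t hst
      have := hinj hst
      omega
    -- the germ-length sequence
    set ν : ℕ → ℝ := fun t => Nat.rec (x k₀ - a₀) (fun t v => min v (M.dlo (y t))) t with hν
    have hν0 : ν 0 = x k₀ - a₀ := rfl
    have hνs : ∀ t, ν (t+1) = min (ν t) (M.dlo (y t)) := fun t => rfl
    have hνpos : ∀ t, 0 < ν t := by
      intro t
      induction t with
      | zero => rw [hν0]; linarith
      | succ n ih => rw [hνs]; exact lt_min ih (M.dlo_pos (hyIoc n))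
    have hνanti : ∀ s t : ℕ, s ≤ t → ν t ≤ ν s := by
      intro s t hst
      induction t with
      | zero => have : s = 0 := by omega
                rw [this]
      | succ n ih =>
        rcases Nat.lt_or_ge s (n+1) with h | h
        · exact le_trans (by rw [hνs]; exact min_le_left _ _) (ih (by omega))
        · have : s = n + 1 := by omega
          rw [this]
    have hgerm : ∀ t, Set.Ico (y t - ν t) (y t) ⊆ M.X := by
      intro t
      induction t with
      | zero =>
        rw [hν0]
        have hy0 : y 0 = x k₀ := by simp [hy]
        rw [hy0]
        have : x k₀ - (x k₀ - a₀) = a₀ := by ring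
        rw [this]
        exact hgerm₀
      | succ n ih =>
        have h1 : Set.Ico (y n - ν (n+1)) (y n) ⊆ M.X := by
          apply Set.Subset.trans ?_ ih
          apply Set.Ico_subset_Ico_left
          have := hνanti n (n+1) (by omega)
          linarith
        have h2 := M.germ_step (hyIoc n) h1 (by rw [hνs]; exact min_le_right _ _)
        rwa [← hysucc] at h2
    -- K' : cap times within y-indexing
    set K' : Set ℕ := {t : ℕ | (k₀ + t) ∈ K} with hK'
    have hK'inf : K'.Infinite := by
      intro hK'fin
      have hsub : K ⊆ ((fun t => k₀ + t) '' K') ∪ Set.Iio (k₀+1) := by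
        intro k hk
        by_cases h : k < k₀ + 1
        · exact Or.inr h
        · left
          refine ⟨k - k₀, ?_, by show k₀ + (k - k₀) = k; omega⟩
          rw [hK']
          simp only [Set.mem_setOf_eq]
          have : k₀ + (k - k₀) = k := by omega
          rw [this]; exact hk
      exact hKinf (((hK'fin.image _).union (Set.finite_Iio _)).subset hsub)
    have hcapt : ∀ t ∈ K', y t ∈ M.CapSet := fun t ht => ht
    by_cases hA : ∃ ε > (0:ℝ), ∀ t, ε ≤ ν t
    case pos =>
      obtain ⟨ε, hε, hεν⟩ := hA
      have hSfin : (y '' K').Finite := by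
        apply eps_separated_finite hε
        · rintro w ⟨t, _, rfl⟩; exact hyIoc t
        · rintro w ⟨t, ht, rfl⟩ w' ⟨t', ht', rfl⟩ hlt
          by_contra hgt
          push_neg at hgt
          have h1 : y t' ∈ Set.Ico (y t - ν t) (y t) := by
            constructor
            · have := hεν t; linarith
            · exact hlt
          exact (hcapt t' ht').1 (hgerm t h1)
      exact hK'inf (Set.Finite.of_finite_image hSfin (fun a _ b _ h => hyinj h))
    case neg =>
      push_neg at hA
      -- binding times
      set BIND : Set ℕ := {t : ℕ | M.dlo (y t) < ν t} with hBIND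
      have hBINDinf : BIND.Infinite := by
        intro hBfin
        obtain ⟨T₀, hT₀⟩ := hBfin.bddAbove
        have hconst : ∀ t, ν (T₀ + 1 + t) = ν (T₀ + 1) := by
          intro t
          induction t with
          | zero => rfl
          | succ n ih =>
            have hnot : (T₀ + 1 + n) ∉ BIND := by
              intro hmem
              have := hT₀ hmem
              omega
            rw [hBIND] at hnot
            simp only [Set.mem_setOf_eq, not_lt] at hnot
            have : T₀ + 1 + (n+1) = (T₀ + 1 + n) + 1 := by omega
            rw [this, hνs, min_eq_left hnot, ih]
        obtain ⟨t, ht⟩ := hA (ν (T₀ + 1)) (hνpos (T₀+1))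
        rcases Nat.lt_or_ge t (T₀ + 1) with h | h
        · have := hνanti t (T₀+1) (by omega)
          linarith
        · have h2 : t = T₀ + 1 + (t - (T₀ + 1)) := by omega
          rw [h2, hconst] at ht
          linarith
      -- pigeonhole on the branch index
      have hUnion : BIND ⊆ ⋃ j : Fin r, {t ∈ BIND | M.pidx (y t) = j} := by
        intro t ht
        exact Set.mem_iUnion.mpr ⟨M.pidx (y t), ht, rfl⟩
      have hpig : ∃ j : Fin r, {t ∈ BIND | M.pidx (y t) = j}.Infinite := by
        by_contra h
        push_neg at h
        exact hBINDinf ((Set.finite_iUnion h).subset hUnion)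
      obtain ⟨j, hjinf⟩ := hpig
      set B' : Set ℕ := {t ∈ BIND | M.pidx (y t) = j} with hB'
      set β : ℝ := M.pts j.castSucc with hβ
      have hydlo : ∀ t ∈ B', y t = β + M.dlo (y t) := by
        intro t ht
        rw [hβ, ← ht.2, dlo]
        ring
      have hbind_germ : ∀ t ∈ B', Set.Ico β (y t) ⊆ M.X := by
        intro t ht
        have h1 : β ≥ y t - ν t := by
          have h2 := ht.1
          rw [hBIND] at h2
          simp only [Set.mem_setOf_eq] at h2
          have h3 := hydlo t ht
          linarith
        exact Set.Subset.trans (Set.Ico_subset_Ico_left h1) (hgerm t)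
      have hdec : ∀ t t' : ℕ, t ∈ BIND → t' ∈ BIND → t < t' → M.dlo (y t') < M.dlo (y t) := by
        intro t t' ht ht' hlt
        have h1 : M.dlo (y t') < ν t' := ht'
        have h2 : ν t' ≤ ν (t+1) := hνanti (t+1) t' (by omega)
        have h3 : ν (t+1) ≤ M.dlo (y t) := by rw [hνs]; exact min_le_right _ _
        linarith
      obtain ⟨t₁, ht₁⟩ := hjinf.nonempty
      have hyX : ∀ t' ∈ B', t₁ < t' → y t' ∈ M.X := by
        intro t' ht' hlt
        apply hbind_germ t₁ ht₁
        constructor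
        · have := M.dlo_pos (hyIoc t')
          have := hydlo t' ht'
          linarith
        · have h1 := hdec t₁ t' ht₁.1 ht'.1 hlt
          have h2 := hydlo t' ht'
          have h3 := hydlo t₁ ht₁
          linarith
      -- exits from X
      set E : Set ℕ := {e : ℕ | y e ∈ M.X ∧ y (e+1) ∉ M.X} with hE
      have hexitpt : ∀ e ∈ E, y e ∈ Set.range (fun j : Fin r => M.pts j.castSucc) := by
        intro e he
        obtain ⟨heX, heX'⟩ := he
        obtain ⟨i, hi⟩ := M.exists_seg (M.X_subset_Ico heX)
        rcases eq_or_lt_of_le hi.1 with heq | hlt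
        · exact ⟨i, heq⟩
        · exfalso
          have hIoc : y e ∈ Set.Ioc (M.pts i.castSucc) (M.pts i.succ) := ⟨hlt, le_of_lt hi.2⟩
          have h1 : M.pm (y e) = y e + M.tr i := M.pm_eq hIoc
          have h2 : M.map (y e) = y e + M.tr i := M.map_eq hi
          have := M.map_mem_X heX
          rw [h2, ← h1, ← hysucc] at this
          exact heX' this
      have hEfin : E.Finite := by
        have hEsub : E ⊆ y ⁻¹' (Set.range (fun j : Fin r => M.pts j.castSucc)) :=
          fun e he => hexitpt e he
        apply Set.Finite.subset ?_ hEsub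
        apply Set.Finite.preimage ?_ (Set.finite_range _)
        exact fun a _ b _ h => hyinj h
      -- extraction of an exit between an in-X time and a later out-of-X time
      have hexit : ∀ n m : ℕ, m < n → y m ∈ M.X → y n ∉ M.X → ∃ e ∈ E, m ≤ e := by
        intro n
        induction n with
        | zero => intro m hm; omega
        | succ n ih =>
          intro m hm hmX hnX
          by_cases h : y n ∈ M.X
          · exact ⟨n, ⟨h, hnX⟩, by omega⟩
          · rcases Nat.lt_or_ge m n with h2 | h2
            · exact ih m h2 hmX h
            · have : m = n := by omega
              rw [this] at hmX
              exact absurd hmX h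
      -- E is unbounded : contradiction
      obtain ⟨T₁, hT₁⟩ := hEfin.bddAbove
      obtain ⟨t', ht'B, ht'gt⟩ := hjinf.exists_gt (max t₁ T₁)
      have ht'X : y t' ∈ M.X := hyX t' ht'B (lt_of_le_of_lt (le_max_left _ _) ht'gt)
      obtain ⟨tc, htcK, htcgt⟩ := hK'inf.exists_gt t'
      have htcX : y tc ∉ M.X := (hcapt tc htcK).1
      obtain ⟨e, heE, hege⟩ := hexit tc t' htcgt ht'X htcX
      have := hT₁ heE
      have : t' ≤ T₁ := le_trans hege this
      have : T₁ < t' := lt_of_le_of_lt (le_max_right t₁ T₁) ht'gt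
      omega

lemma pts_succ_mem_Ioc (j : Fin r) : M.pts j.succ ∈ Set.Ioc (0:ℝ) 1 := by
  constructor
  · have h1 : (0 : Fin (r+1)) < j.succ := by
      simp [Fin.lt_def]
    have := M.pts_mono h1
    rwa [M.pts_zero] at this
  · exact M.pts_succ_le_one j

lemma capset_finite : (M.CapSet).Finite := by
  have h1 : M.CapSet ⊆ ⋃ j : Fin r,
      (M.CapSet ∩ Set.range (fun k => (M.pm)^[k] (M.pts j.succ))) := by
    intro b hb
    obtain ⟨k, j, hkj⟩ := M.cap_in_orbit hb
    exact Set.mem_iUnion.mpr ⟨j, hb, ⟨k, hkj⟩⟩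
  exact (Set.finite_iUnion
    (fun j => M.orbit_caps_finite (M.pts j.succ) (M.pts_succ_mem_Ioc j))).subset h1

end ITM

/-- The attractor of an interval translation map has only finitely many interval
components. -/
theorem finitely_many_interval_components {r : ℕ} (M : ITM r) :
    {J : Set ℝ | M.IsIntervalComponent J}.Finite := by
  apply Set.Finite.of_finite_image (f := sSup)
  · apply Set.Finite.subset M.capset_finite
    rintro w ⟨J, hJ, rfl⟩
    obtain ⟨⟨a, b, hab, rfl⟩, x, hxX, hcc⟩ := hJ
    rw [csSup_Ico hab]
    have hsubX : Set.Ico a b ⊆ M.X := by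
      rw [hcc]; exact connectedComponentIn_subset _ _
    have hbX : b ∉ M.X := by
      intro hbX
      have hIcc : Set.Icc a b ⊆ M.X := by
        intro w hw
        rcases eq_or_lt_of_le hw.2 with h | h
        · rwa [h]
        · exact hsubX ⟨hw.1, h⟩
      have hxIcc : x ∈ Set.Icc a b := by
        have : x ∈ Set.Ico a b := by
          rw [hcc]
          exact mem_connectedComponentIn hxX
        exact ⟨this.1, le_of_lt this.2⟩
      have := (isPreconnected_Icc (a := a) (b := b)).subset_connectedComponentIn hxIcc hIcc
      rw [← hcc] at this
      have hb : b ∈ Set.Ico a b := this ⟨le_of_lt hab, le_refl b⟩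
      exact absurd hb.2 (lt_irrefl b)
    exact ⟨hbX, a, hab, hsubX⟩
  · rintro J ⟨⟨a, b, hab, rfl⟩, x, hxX, hcc⟩ J' ⟨⟨a', b', hab', rfl⟩, x', hxX', hcc'⟩ hS
    rw [csSup_Ico hab, csSup_Ico hab'] at hS
    subst hS
    have hu : max a a' ∈ Set.Ico a b := ⟨le_max_left _ _, max_lt hab hab'⟩
    have hu' : max a a' ∈ Set.Ico a' b := ⟨le_max_right _ _, max_lt hab hab'⟩
    rw [hcc] at hu
    rw [hcc'] at hu'
    have e1 : connectedComponentIn M.X x = connectedComponentIn M.X (max a a') :=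
      connectedComponentIn_eq hu
    have e2 : connectedComponentIn M.X x' = connectedComponentIn M.X (max a a') :=
      connectedComponentIn_eq hu'
    rw [hcc, hcc', e1, e2]
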